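/- Let A = [A_{ij}] be an N×N block real matrix with blocks A_{ij} ∈ ℝ^{n_i×n_j}. Suppose there exist symmetric positive definite matrices P_i ∈ ℝ^{n_i×n_i} (i = 1,…,N) such that, defining the symmetric block matrix W = [W_{ij}] by W_{ij} := −A_{ji}ᵀP_j − P_i A_{ij}, the diagonal pivots Ŵ_{ii} of the block Cholesky recursion applied to W are positive definite for all i = 1,…,N. Then A is Hurwitz (so the networked system ẋ = Ax is globally exponentially stable). -/

import Mathlib

open Matrix

/-- The full matrix assembled from an `N × N` family of blocks
(`W i j` is the `(i,j)`-th block, of size `n i × n j`). -/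
def ofBlocks {N : ℕ} {n : Fin N → ℕ}
    (W : ∀ i j : Fin N, Matrix (Fin (n i)) (Fin (n j)) ℝ) :
    Matrix ((i : Fin N) × Fin (n i)) ((j : Fin N) × Fin (n j)) ℝ :=
  Matrix.of fun a b => W a.1 b.1 a.2 b.2

/-- The block Cholesky recursion:
`Ŵ i j = W i j − Σ_{k < j} Ŵ i k ⬝ (Ŵ k k)⁻¹ ⬝ (Ŵ j k)ᵀ`. -/
noncomputable def chol {N : ℕ} {n : Fin N → ℕ}
    (W : ∀ i j : Fin N, Matrix (Fin (n i)) (Fin (n j)) ℝ)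
    (i j : Fin N) : Matrix (Fin (n i)) (Fin (n j)) ℝ :=
  W i j - ∑ k : Fin N,
    if h : (k : ℕ) < (j : ℕ) then
      chol W i k * (chol W k k)⁻¹ * (chol W j k)ᵀ
    else 0
termination_by (j : ℕ)
decreasing_by all_goals exact h

/-- A real square matrix is Hurwitz if every root in `ℂ` of its characteristic
polynomial has strictly negative real part. -/
def IsHurwitz {I : Type*} [Fintype I] [DecidableEq I] (A : Matrix I I ℝ) : Prop :=
  ∀ z : ℂ, ((A.map (Complex.ofReal)).charpoly).IsRoot z → z.re < 0

/-! ### Auxiliary material -/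

section Aux

open Polynomial Complex

theorem aux_transpose_eq_self {ι : Type*} [Fintype ι] {M : Matrix ι ι ℝ} (hM : M.IsHermitian) :
    Mᵀ = M := by
  rw [← Matrix.conjTranspose_eq_transpose_of_trivial]; exact hM.eq

theorem aux_dotProduct_mulVec_symm {ι : Type*} [Fintype ι] {M : Matrix ι ι ℝ} (hM : Mᵀ = M)
    (x y : ι → ℝ) : x ⬝ᵥ M *ᵥ y = y ⬝ᵥ M *ᵥ x := by
  rw [Matrix.dotProduct_mulVec, ← Matrix.mulVec_transpose, hM, dotProduct_comm]

theorem aux_eigvec_of_root {ι : Type*} [Fintype ι] [DecidableEq ι] (M : Matrix ι ι ℂ) (z : ℂ)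
    (h : M.charpoly.IsRoot z) : ∃ v, v ≠ 0 ∧ M *ᵥ v = z • v := by
  have hd : (Matrix.diagonal (fun _ : ι => z) - M).det = 0 := by
    have h2 : (Polynomial.evalRingHom z) M.charpoly = 0 := h
    rw [Matrix.charpoly, RingHom.map_det] at h2
    rw [← h2]
    congr 1
    ext i j
    by_cases hij : i = j <;>
      simp [charmatrix_apply, Matrix.diagonal, hij, coe_evalRingHom]
  obtain ⟨v, hv, h0⟩ := (Matrix.exists_mulVec_eq_zero_iff).2 hd
  refine ⟨v, hv, ?_⟩
  rw [Matrix.sub_mulVec] at h0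
  have hdv : Matrix.diagonal (fun _ : ι => z) *ᵥ v = z • v := by
    ext i; simp [Matrix.mulVec_diagonal]
  rw [hdv] at h0
  rw [sub_eq_zero] at h0
  exact h0.symm

theorem aux_dot_coe {ι : Type*} [Fintype ι] (M : Matrix ι ι ℝ) (a b : ι → ℝ) :
    (fun i => ((a i : ℂ))) ⬝ᵥ (M.map Complex.ofReal) *ᵥ (fun i => ((b i : ℂ)))
      = ((a ⬝ᵥ M *ᵥ b : ℝ) : ℂ) := by
  simp only [dotProduct, mulVec, Matrix.map_apply, dotProduct]
  push_cast
  rfl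

theorem aux_dot_map_pos {ι : Type*} [Fintype ι] (M : Matrix ι ι ℝ) (hM : M.PosDef)
    (v : ι → ℂ) (hv : v ≠ 0) :
    ∃ r : ℝ, 0 < r ∧ star v ⬝ᵥ (M.map Complex.ofReal) *ᵥ v = (r : ℂ) := by
  set x : ι → ℝ := fun i => (v i).re with hx
  set y : ι → ℝ := fun i => (v i).im with hy
  have hsymm : Mᵀ = M := aux_transpose_eq_self hM.isHermitian
  have hveq : v = (fun i => ((x i : ℂ))) + Complex.I • (fun i => ((y i : ℂ))) := by
    funext i
    simp [hx, hy, Complex.ext_iff]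
  have hsv : star v = (fun i => ((x i : ℂ))) - Complex.I • (fun i => ((y i : ℂ))) := by
    funext i
    simp [hx, hy, Complex.ext_iff]
  refine ⟨x ⬝ᵥ M *ᵥ x + y ⬝ᵥ M *ᵥ y, ?_, ?_⟩
  · have hxy : x ≠ 0 ∨ y ≠ 0 := by
      by_contra h
      push_neg at h
      apply hv
      funext i
      have h1 : x i = 0 := by rw [h.1]; rfl
      have h2 : y i = 0 := by rw [h.2]; rfl
      apply Complex.ext
      · simpa using h1
      · simpa using h2
    rcases hxy with h | h
    · have h1 := hM.dotProduct_mulVec_pos h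
      have h2 := hM.posSemidef.dotProduct_mulVec_nonneg y
      simp only [star_trivial] at h1 h2
      linarith
    · have h1 := hM.dotProduct_mulVec_pos h
      have h2 := hM.posSemidef.dotProduct_mulVec_nonneg x
      simp only [star_trivial] at h1 h2
      linarith
  · rw [hsv]
    conv_lhs => rw [hveq]
    rw [Matrix.mulVec_add, Matrix.mulVec_smul, sub_dotProduct, smul_dotProduct,
      dotProduct_add, dotProduct_add, dotProduct_smul, dotProduct_smul,
      aux_dot_coe, aux_dot_coe, aux_dot_coe, aux_dot_coe]
    rw [aux_dotProduct_mulVec_symm hsymm x y]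
    push_cast
    simp only [smul_eq_mul]
    ring_nf
    simp [Complex.I_sq]

theorem aux_lyapunov {ι : Type*} [Fintype ι] [DecidableEq ι] (B Pf Qf : Matrix ι ι ℝ)
    (hPf : Pf.PosDef) (hQf : Qf.PosDef) (heq : Bᵀ * Pf + Pf * B = -Qf) :
    ∀ z : ℂ, ((B.map Complex.ofReal).charpoly).IsRoot z → z.re < 0 := by
  intro z hz
  obtain ⟨v, hv, hev⟩ := aux_eigvec_of_root _ z hz
  set Bc := B.map Complex.ofReal with hBc
  set Pc := Pf.map Complex.ofReal with hPc
  set Qc := Qf.map Complex.ofReal with hQc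
  obtain ⟨p, hp, hpe⟩ := aux_dot_map_pos Pf hPf v hv
  obtain ⟨q, hq, hqe⟩ := aux_dot_map_pos Qf hQf v hv
  rw [← hPc] at hpe
  rw [← hQc] at hqe
  have hmap : (Bᵀ * Pf + Pf * B).map Complex.ofReal = Bcᵀ * Pc + Pc * Bc := by
    have h1 : ∀ X Y : Matrix ι ι ℝ, (X * Y).map Complex.ofReal
        = X.map Complex.ofReal * Y.map Complex.ofReal := fun X Y =>
      Matrix.map_mul (f := Complex.ofRealHom)
    have h2 : ∀ X Y : Matrix ι ι ℝ, (X + Y).map Complex.ofReal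
        = X.map Complex.ofReal + Y.map Complex.ofReal := fun X Y =>
      Matrix.map_add _ (fun a b => by push_cast; ring) X Y
    rw [h2, h1, h1, Matrix.transpose_map]
  have hstar : Bc *ᵥ star v = star (Bc *ᵥ v) := by
    funext i
    simp only [mulVec, dotProduct, Pi.star_apply, star_sum, star_mul', hBc,
      Matrix.map_apply, Complex.star_def, Complex.conj_ofReal]
  have key : star v ⬝ᵥ ((Bcᵀ * Pc + Pc * Bc) *ᵥ v) = ((2 * z.re : ℝ) : ℂ) * (p : ℂ) := by
    rw [Matrix.add_mulVec, dotProduct_add, ← Matrix.mulVec_mulVec, ← Matrix.mulVec_mulVec]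
    have t1 : star v ⬝ᵥ Bcᵀ *ᵥ (Pc *ᵥ v) = (starRingEnd ℂ z) * (p : ℂ) := by
      rw [Matrix.dotProduct_mulVec, Matrix.vecMul_transpose, hstar, hev, star_smul,
        smul_dotProduct, hpe]
      simp
    have t2 : star v ⬝ᵥ Pc *ᵥ (Bc *ᵥ v) = z * (p : ℂ) := by
      rw [hev, Matrix.mulVec_smul, dotProduct_smul, hpe]
      simp
    rw [t1, t2]
    rw [← add_mul]
    congr 1
    rw [add_comm]
    exact_mod_cast Complex.add_conj z
  have hQeq : star v ⬝ᵥ ((Bcᵀ * Pc + Pc * Bc) *ᵥ v) = -(q : ℂ) := by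
    rw [← hmap, heq]
    have h3 : (-Qf).map Complex.ofReal = -Qc := by
      ext i j; simp [Matrix.map_apply, hQc]
    rw [h3, Matrix.neg_mulVec, dotProduct_neg, hqe]
  rw [key] at hQeq
  have hre : (2 * z.re) * p = -q := by exact_mod_cast hQeq
  nlinarith

/-! ### Block-matrix lemmas -/

theorem ofBlocks_transpose {N : ℕ} {n : Fin N → ℕ}
    (X : ∀ i j : Fin N, Matrix (Fin (n i)) (Fin (n j)) ℝ) :
    (ofBlocks X)ᵀ = ofBlocks (fun i j => (X j i)ᵀ) := rfl

theorem ofBlocks_mul {N : ℕ} {n : Fin N → ℕ}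
    (X Y : ∀ i j : Fin N, Matrix (Fin (n i)) (Fin (n j)) ℝ) :
    ofBlocks X * ofBlocks Y = ofBlocks (fun i j => ∑ k, X i k * Y k j) := by
  ext ⟨i, a⟩ ⟨j, b⟩
  simp only [Matrix.mul_apply, ofBlocks, Matrix.of_apply]
  rw [← Finset.univ_sigma_univ, Finset.sum_sigma]
  simp [Matrix.sum_apply, Matrix.mul_apply]

theorem ofBlocks_mul_bd {N : ℕ} {n : Fin N → ℕ}
    (X : ∀ i j : Fin N, Matrix (Fin (n i)) (Fin (n j)) ℝ)
    (D : ∀ i : Fin N, Matrix (Fin (n i)) (Fin (n i)) ℝ) :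
    ofBlocks X * blockDiagonal' D = ofBlocks (fun i j => X i j * D j) := by
  ext ⟨i, a⟩ ⟨j, b⟩
  simp only [Matrix.mul_apply, ofBlocks, Matrix.of_apply]
  rw [← Finset.univ_sigma_univ, Finset.sum_sigma]
  simp only [Matrix.mul_apply]
  rw [Finset.sum_eq_single j]
  · apply Finset.sum_congr rfl
    intro c _
    rw [blockDiagonal'_apply_eq]
  · intro k _ hk
    apply Finset.sum_eq_zero
    intro c _
    rw [blockDiagonal'_apply_ne _ _ _ hk, mul_zero]
  · simp

theorem bd_mul_ofBlocks {N : ℕ} {n : Fin N → ℕ}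
    (X : ∀ i j : Fin N, Matrix (Fin (n i)) (Fin (n j)) ℝ)
    (D : ∀ i : Fin N, Matrix (Fin (n i)) (Fin (n i)) ℝ) :
    blockDiagonal' D * ofBlocks X = ofBlocks (fun i j => D i * X i j) := by
  ext ⟨i, a⟩ ⟨j, b⟩
  simp only [Matrix.mul_apply, ofBlocks, Matrix.of_apply]
  rw [← Finset.univ_sigma_univ, Finset.sum_sigma]
  simp only [Matrix.mul_apply]
  rw [Finset.sum_eq_single i]
  · apply Finset.sum_congr rfl
    intro c _
    rw [blockDiagonal'_apply_eq]
  · intro k _ hk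
    apply Finset.sum_eq_zero
    intro c _
    rw [blockDiagonal'_apply_ne _ _ _ (Ne.symm hk), zero_mul]
  · simp

theorem bd_posDef {N : ℕ} {n : Fin N → ℕ}
    (D : ∀ i : Fin N, Matrix (Fin (n i)) (Fin (n i)) ℝ)
    (hD : ∀ i, (D i).PosDef) : (blockDiagonal' D).PosDef := by
  rw [posDef_iff_dotProduct_mulVec]
  constructor
  · rw [Matrix.IsHermitian, conjTranspose_eq_transpose_of_trivial, blockDiagonal'_transpose]
    have he : (fun k => (D k)ᵀ) = D := by
      funext k
      exact (conjTranspose_eq_transpose_of_trivial _).symm.trans (hD k).isHermitian.eq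
    rw [he]
  · intro x hx
    have hxv : ∀ j b, (blockDiagonal' D *ᵥ x) ⟨j, b⟩ = (D j *ᵥ (fun c => x ⟨j, c⟩)) b := by
      intro j b
      simp only [mulVec, dotProduct]
      rw [← Finset.univ_sigma_univ, Finset.sum_sigma]
      rw [Finset.sum_eq_single j]
      · apply Finset.sum_congr rfl
        intro c _
        rw [blockDiagonal'_apply_eq]
      · intro k _ hk
        apply Finset.sum_eq_zero
        intro c _
        rw [blockDiagonal'_apply_ne _ _ _ (Ne.symm hk), zero_mul]
      · simp
    have hdot : star x ⬝ᵥ blockDiagonal' D *ᵥ x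
        = ∑ j, (fun c => x ⟨j, c⟩) ⬝ᵥ D j *ᵥ (fun c => x ⟨j, c⟩) := by
      simp only [dotProduct, star_trivial]
      rw [← Finset.univ_sigma_univ, Finset.sum_sigma]
      congr 1
      funext j
      congr 1
      funext b
      rw [hxv j b]
    rw [hdot]
    obtain ⟨⟨j0, b0⟩, hb0⟩ : ∃ a, x a ≠ 0 := Function.ne_iff.mp hx
    apply Finset.sum_pos'
    · intro j _
      have := (hD j).posSemidef.dotProduct_mulVec_nonneg (fun c => x ⟨j, c⟩)
      simpa using this
    · refine ⟨j0, Finset.mem_univ _, ?_⟩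
      have := (hD j0).dotProduct_mulVec_pos (x := fun c => x ⟨j0, c⟩) (by intro h; exact hb0 (congrFun h b0))
      simpa using this

/-! ### The block Cholesky factorization -/

/-- The lower unitriangular factor of the block Cholesky factorization. -/
noncomputable def cholL {N : ℕ} {n : Fin N → ℕ}
    (W : ∀ i j : Fin N, Matrix (Fin (n i)) (Fin (n j)) ℝ) (i j : Fin N) :
    Matrix (Fin (n i)) (Fin (n j)) ℝ :=
  if (j : ℕ) ≤ (i : ℕ) then chol W i j * (chol W j j)⁻¹ else 0

theorem chol_eq {N : ℕ} {n : Fin N → ℕ}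
    (W : ∀ i j : Fin N, Matrix (Fin (n i)) (Fin (n j)) ℝ) (i j : Fin N) :
    chol W i j = W i j - ∑ k : Fin N,
      if (k : ℕ) < (j : ℕ) then chol W i k * (chol W k k)⁻¹ * (chol W j k)ᵀ else 0 := by
  rw [chol]
  simp

theorem cholL_diag {N : ℕ} {n : Fin N → ℕ}
    (W : ∀ i j : Fin N, Matrix (Fin (n i)) (Fin (n j)) ℝ)
    (hu : ∀ k, IsUnit (chol W k k).det) (j : Fin N) : cholL W j j = 1 := by
  rw [cholL, if_pos le_rfl, Matrix.mul_nonsing_inv _ (hu j)]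

theorem chol_key_le {N : ℕ} {n : Fin N → ℕ}
    (W : ∀ i j : Fin N, Matrix (Fin (n i)) (Fin (n j)) ℝ)
    (hsymk : ∀ k, (chol W k k)ᵀ = chol W k k)
    (hu : ∀ k, IsUnit (chol W k k).det)
    {i j : Fin N} (hji : (j : ℕ) ≤ (i : ℕ)) :
    W i j = ∑ k, cholL W i k * chol W k k * (cholL W j k)ᵀ := by
  have hterm : ∀ k : Fin N, cholL W i k * chol W k k * (cholL W j k)ᵀ
      = (if k = j then chol W i j else 0)
        + (if (k : ℕ) < (j : ℕ) then chol W i k * (chol W k k)⁻¹ * (chol W j k)ᵀ else 0) := by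
    intro k
    rcases lt_trichotomy (k : ℕ) (j : ℕ) with hk | hk | hk
    · have hki : (k : ℕ) ≤ (i : ℕ) := le_trans hk.le hji
      have hkne : k ≠ j := by intro h; rw [h] at hk; omega
      rw [cholL, if_pos hki, cholL, if_pos hk.le, if_neg hkne, if_pos hk, zero_add,
        Matrix.transpose_mul, Matrix.transpose_nonsing_inv, hsymk k]
      rw [← Matrix.mul_assoc, Matrix.nonsing_inv_mul_cancel_right _ _ (hu k)]
    · have hkj : k = j := Fin.ext hk
      subst hkj
      rw [cholL_diag W hu, cholL, if_pos (le_trans hk.le hji), if_pos rfl, if_neg (by omega),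
        add_zero, Matrix.transpose_one, Matrix.mul_one,
        Matrix.nonsing_inv_mul_cancel_right _ _ (hu k)]
    · have h1 : ¬ (k : ℕ) ≤ (j : ℕ) := by omega
      have hkne : k ≠ j := by intro h; rw [h] at hk; omega
      have hz : cholL W j k = 0 := by rw [cholL, if_neg h1]
      rw [hz, Matrix.transpose_zero, Matrix.mul_zero, if_neg hkne, if_neg (by omega), add_zero]
  rw [Finset.sum_congr rfl (fun k _ => hterm k), Finset.sum_add_distrib,
    Finset.sum_ite_eq' Finset.univ j (fun _ => chol W i j)]
  simp only [Finset.mem_univ, if_pos]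
  have := chol_eq W i j
  rw [eq_sub_iff_add_eq] at this
  rw [this]

theorem chol_key {N : ℕ} {n : Fin N → ℕ}
    (W : ∀ i j : Fin N, Matrix (Fin (n i)) (Fin (n j)) ℝ)
    (hsymW : ∀ i j, (W i j)ᵀ = W j i)
    (hsymk : ∀ k, (chol W k k)ᵀ = chol W k k)
    (hu : ∀ k, IsUnit (chol W k k).det)
    (i j : Fin N) :
    W i j = ∑ k, cholL W i k * chol W k k * (cholL W j k)ᵀ := by
  rcases le_or_gt (j : ℕ) (i : ℕ) with h | h
  · exact chol_key_le W hsymk hu h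
  · have h2 := chol_key_le W hsymk hu (i := j) (j := i) h.le
    have h3 := congrArg Matrix.transpose h2
    rw [hsymW j i] at h3
    rw [h3, Matrix.transpose_sum]
    apply Finset.sum_congr rfl
    intro k _
    rw [Matrix.transpose_mul, Matrix.transpose_mul, Matrix.transpose_transpose, hsymk k,
      Matrix.mul_assoc]

theorem chol_factor {N : ℕ} {n : Fin N → ℕ}
    (W : ∀ i j : Fin N, Matrix (Fin (n i)) (Fin (n j)) ℝ)
    (hsymW : ∀ i j, (W i j)ᵀ = W j i)
    (hsymk : ∀ k, (chol W k k)ᵀ = chol W k k)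
    (hu : ∀ k, IsUnit (chol W k k).det) :
    ofBlocks W = ofBlocks (cholL W) * blockDiagonal' (fun k => chol W k k)
      * (ofBlocks (cholL W))ᵀ := by
  rw [ofBlocks_mul_bd, ofBlocks_transpose, ofBlocks_mul]
  exact congrArg ofBlocks (funext fun i => funext fun j => chol_key W hsymW hsymk hu i j)

theorem cholL_inj {N : ℕ} {n : Fin N → ℕ}
    (W : ∀ i j : Fin N, Matrix (Fin (n i)) (Fin (n j)) ℝ)
    (hu : ∀ k, IsUnit (chol W k k).det)
    (x : ((i : Fin N) × Fin (n i)) → ℝ)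
    (hx : (ofBlocks (cholL W))ᵀ *ᵥ x = 0) : x = 0 := by
  have hblock : ∀ j : Fin N, ∀ b : Fin (n j),
      ∑ i : Fin N, ∑ a : Fin (n i), cholL W i j a b * x ⟨i, a⟩ = 0 := by
    intro j b
    have := congrFun hx ⟨j, b⟩
    rw [Pi.zero_apply] at this
    rw [← this]
    simp only [mulVec, dotProduct, transpose_apply, ofBlocks, Matrix.of_apply]
    rw [← Finset.univ_sigma_univ, Finset.sum_sigma]
  have main : ∀ m : ℕ, ∀ j : Fin N, N - (j : ℕ) ≤ m → ∀ b, x ⟨j, b⟩ = 0 := by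
    intro m
    induction m with
    | zero => intro j hj; exfalso; have := j.isLt; omega
    | succ m ih =>
      intro j hj b
      have h0 := hblock j b
      rw [Finset.sum_eq_single j] at h0
      · have h1 : ∑ a : Fin (n j), cholL W j j a b * x ⟨j, a⟩ = x ⟨j, b⟩ := by
          rw [cholL_diag W hu]
          rw [Finset.sum_eq_single b]
          · simp
          · intro a _ ha
            rw [Matrix.one_apply_ne' (Ne.symm ha), zero_mul]
          · simp
        rw [h1] at h0
        exact h0
      · intro k _ hk
        rcases lt_or_gt_of_ne (fun h : (k : ℕ) = (j : ℕ) => hk (Fin.ext h)) with h | h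
        · apply Finset.sum_eq_zero
          intro a _
          rw [cholL, if_neg (by omega), Matrix.zero_apply, zero_mul]
        · apply Finset.sum_eq_zero
          intro a _
          rw [ih k (by omega) a, mul_zero]
      · simp
  funext ⟨j, b⟩
  exact main (N - (j : ℕ)) j le_rfl b

theorem ofBlocks_posDef {N : ℕ} {n : Fin N → ℕ}
    (W : ∀ i j : Fin N, Matrix (Fin (n i)) (Fin (n j)) ℝ)
    (hsymW : ∀ i j, (W i j)ᵀ = W j i)
    (hpiv : ∀ k, (chol W k k).PosDef) : (ofBlocks W).PosDef := by
  have hsymk : ∀ k, (chol W k k)ᵀ = chol W k k := fun k =>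
    aux_transpose_eq_self (hpiv k).isHermitian
  have hu : ∀ k, IsUnit (chol W k k).det := fun k => (hpiv k).det_pos.ne'.isUnit
  rw [posDef_iff_dotProduct_mulVec]
  constructor
  · rw [Matrix.IsHermitian, conjTranspose_eq_transpose_of_trivial, ofBlocks_transpose]
    have hWW : (fun i j => (W j i)ᵀ) = W := by
      funext i j
      exact hsymW j i
    rw [hWW]
  · intro x hx
    rw [chol_factor W hsymW hsymk hu]
    set L := ofBlocks (cholL W) with hL
    set Df := blockDiagonal' (fun k => chol W k k) with hDf
    have hy : Lᵀ *ᵥ x ≠ 0 := by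
      intro h
      exact hx (cholL_inj W hu x h)
    have hcalc : star x ⬝ᵥ (L * Df * Lᵀ) *ᵥ x = star (Lᵀ *ᵥ x) ⬝ᵥ Df *ᵥ (Lᵀ *ᵥ x) := by
      simp only [star_trivial]
      rw [← Matrix.mulVec_mulVec, ← Matrix.mulVec_mulVec, Matrix.dotProduct_mulVec,
        ← Matrix.mulVec_transpose]
    rw [hcalc]
    exact (bd_posDef _ hpiv).dotProduct_mulVec_pos hy

end Aux

/-- Decentralized stability analysis: if there are symmetric positive definite
`P i` such that all the block Cholesky pivots of the block matrix
`W i j = −A j iᵀ P j − P i ⬝ A i j` are positive definite, then the networked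
system matrix `A` is Hurwitz. -/
theorem stmt13 {N : ℕ} {n : Fin N → ℕ}
    (A : ∀ i j : Fin N, Matrix (Fin (n i)) (Fin (n j)) ℝ)
    (P : ∀ i : Fin N, Matrix (Fin (n i)) (Fin (n i)) ℝ)
    (hP : ∀ i, (P i).PosDef)
    (hpiv : ∀ i : Fin N,
      (chol (fun i j => -((A j i)ᵀ * P j) - P i * A i j) i i).PosDef) :
    IsHurwitz (ofBlocks A) := by
  set W : ∀ i j : Fin N, Matrix (Fin (n i)) (Fin (n j)) ℝ :=
    fun i j => -((A j i)ᵀ * P j) - P i * A i j with hWdef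
  have hPsym : ∀ i, (P i)ᵀ = P i := fun i => aux_transpose_eq_self (hP i).isHermitian
  have hsymW : ∀ i j, (W i j)ᵀ = W j i := by
    intro i j
    simp only [hWdef, Matrix.transpose_sub, Matrix.transpose_neg, Matrix.transpose_mul,
      Matrix.transpose_transpose, hPsym]
    abel
  have hQf : (ofBlocks W).PosDef := ofBlocks_posDef W hsymW hpiv
  have hPf : (blockDiagonal' P).PosDef := bd_posDef P hP
  have heq : (ofBlocks A)ᵀ * blockDiagonal' P + blockDiagonal' P * ofBlocks A
      = -(ofBlocks W) := by
    rw [ofBlocks_transpose, ofBlocks_mul_bd, bd_mul_ofBlocks]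
    ext ⟨i, a⟩ ⟨j, b⟩
    simp only [ofBlocks, Matrix.of_apply, Matrix.add_apply, Matrix.neg_apply, hWdef,
      Matrix.sub_apply]
    ring
  exact aux_lyapunov (ofBlocks A) (blockDiagonal' P) (ofBlocks W) hPf hQf heq
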